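/- (Interference-avoiding principle.) Let w_1,…,w_m ∈ ℝⁿ and β_1,…,β_m ∈ ℝ be the first-layer parameters, and let D_1, D_2 ⊆ ℝⁿ be finite sets such that for some index ν: w_νᵀx + β_ν ≤ 0 for all x ∈ D_1 and w_νᵀx + β_ν > 0 for all x ∈ D_2. Suppose u ∈ ℝ^m and c ∈ ℝ are second-layer parameters with Σ_{j=1}^m u_j σ(w_jᵀx + β_j) + c > 0 for all x ∈ D_1. Then there exists u' ∈ ℝ^m with u'_j = u_j for all j ≠ ν such that Σ_{j=1}^m u'_j σ(w_jᵀx + β_j) + c > 0 for all x ∈ D_1 and Σ_{j=1}^m u'_j σ(w_jᵀx + β_j) + c < 0 for all x ∈ D_2; that is, the second-layer unit remains activated by D_1 but is not activated by D_2. -/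

import Mathlib

open Matrix in
/-- **Interference-avoiding principle.** If a first-layer hyperplane
`(w ν, β ν)` separates `D₁` (nonpositive side) from `D₂` (positive side), and a
second-layer unit is activated by every point of `D₁`, then by changing only its
`ν`-th input weight the unit remains activated by `D₁` while its input sum becomes
negative on all of `D₂`. -/
theorem stmt_12 (n m : ℕ) (w : Fin m → Fin n → ℝ) (β : Fin m → ℝ)
    (D₁ D₂ : Set (Fin n → ℝ)) (hfin₁ : D₁.Finite) (hfin₂ : D₂.Finite)
    (ν : Fin m)
    (hν₁ : ∀ x ∈ D₁, w ν ⬝ᵥ x + β ν ≤ 0)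
    (hν₂ : ∀ x ∈ D₂, 0 < w ν ⬝ᵥ x + β ν)
    (u : Fin m → ℝ) (c : ℝ)
    (hu : ∀ x ∈ D₁, 0 < ∑ j, u j * max 0 (w j ⬝ᵥ x + β j) + c) :
    ∃ u' : Fin m → ℝ, (∀ j, j ≠ ν → u' j = u j) ∧
      (∀ x ∈ D₁, 0 < ∑ j, u' j * max 0 (w j ⬝ᵥ x + β j) + c) ∧
      (∀ x ∈ D₂, ∑ j, u' j * max 0 (w j ⬝ᵥ x + β j) + c < 0) := by
  classical
  set a : (Fin n → ℝ) → ℝ := fun x => w ν ⬝ᵥ x + β ν with ha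
  set rest : (Fin n → ℝ) → ℝ :=
    fun x => ∑ j ∈ Finset.univ.erase ν, u j * max 0 (w j ⬝ᵥ x + β j) with hrest
  set g : (Fin n → ℝ) → ℝ := fun x => (-(rest x + c)) / a x with hg
  obtain ⟨b, hb⟩ := (hfin₂.image g).bddBelow
  refine ⟨Function.update u ν (min b (u ν) - 1), ?_, ?_, ?_⟩
  · intro j hj; exact Function.update_of_ne hj _ _
  · intro x hx
    have hσ : max 0 (a x) = 0 := max_eq_left (hν₁ x hx)
    have key : ∀ v : Fin m → ℝ,
        ∑ j, v j * max 0 (w j ⬝ᵥ x + β j)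
          = v ν * max 0 (a x) + ∑ j ∈ Finset.univ.erase ν,
              v j * max 0 (w j ⬝ᵥ x + β j) := by
      intro v
      rw [← Finset.add_sum_erase _ _ (Finset.mem_univ ν)]
    have h1 := key (Function.update u ν (min b (u ν) - 1))
    have h2 := key u
    rw [hσ, mul_zero, zero_add] at h1 h2
    have heq : ∀ j ∈ Finset.univ.erase ν,
        Function.update u ν (min b (u ν) - 1) j * max 0 (w j ⬝ᵥ x + β j)
          = u j * max 0 (w j ⬝ᵥ x + β j) := by
      intro j hj
      rw [Function.update_of_ne (Finset.ne_of_mem_erase hj)]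
    rw [h1, Finset.sum_congr rfl heq, ← h2]
    exact hu x hx
  · intro x hx
    have hax : 0 < a x := hν₂ x hx
    have hσ : max 0 (a x) = a x := max_eq_right hax.le
    have key : ∑ j, Function.update u ν (min b (u ν) - 1) j * max 0 (w j ⬝ᵥ x + β j)
        = (min b (u ν) - 1) * a x + rest x := by
      rw [← Finset.add_sum_erase _ _ (Finset.mem_univ ν), Function.update_self, hσ]
      congr 1
      refine Finset.sum_congr rfl fun j hj => ?_
      rw [Function.update_of_ne (Finset.ne_of_mem_erase hj)]
    rw [key]
    have hgx : b ≤ g x := hb ⟨x, hx, rfl⟩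
    have hlt : min b (u ν) - 1 < g x :=
      lt_of_lt_of_le (by linarith [min_le_left b (u ν)]) hgx
    have : (min b (u ν) - 1) * a x < -(rest x + c) :=
      calc (min b (u ν) - 1) * a x < g x * a x :=
            mul_lt_mul_of_pos_right hlt hax
        _ = -(rest x + c) := by
            show -(rest x + c) / a x * a x = -(rest x + c)
            exact div_mul_cancel₀ _ hax.ne'
    linarith
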